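/- Let G be a multigraph realizing degree sequence d with m_t light triple-edges, m_d light double-edges, and no other non-simple edges, and fix a simple three-star v_1v_3v_5v_7. Then the number of light simple ordered three-stars v_2v_4v_6v_8 such that (a) {v_2,v_4,v_6,v_8} ∩ {v_1,v_3,v_5,v_7} = ∅, and (b) v_1v_2 is a non-edge and none of v_3v_4, v_5v_6, v_7v_8 is a multi-edge, is at least L_3 - 18·m_t·d_h² - 12·m_d·d_h² - B_3 - 3·(m_t + m_d)·B_2 - d_h³ - 9·B_2, where B_k = Σ_{i=1}^{d_1} [d_{h+i}]_k. -/

import Mathlib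

open Finset

/-- A multigraph on `n` nodes, given by a symmetric multiplicity function.
`mult i i` is the multiplicity of the loop at `i`. -/
structure Multigraph (n : ℕ) where
  mult : Fin n → Fin n → ℕ
  symm : ∀ i j, mult i j = mult j i

namespace Multigraph

/-- The degree of a node: a loop counts twice. -/
def deg {n : ℕ} (G : Multigraph n) (i : Fin n) : ℕ :=
  2 * G.mult i i + ∑ j ∈ Finset.univ.filter (fun j => j ≠ i), G.mult i j

/-- `i j` is a simple edge: non-loop of multiplicity exactly 1. -/
def Simple {n : ℕ} (G : Multigraph n) (i j : Fin n) : Prop :=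
  i ≠ j ∧ G.mult i j = 1

instance {n : ℕ} (G : Multigraph n) (i j : Fin n) : Decidable (G.Simple i j) :=
  inferInstanceAs (Decidable (i ≠ j ∧ G.mult i j = 1))

end Multigraph

/-- The (0-indexed) degree sequence extended to all of `ℕ` by zero. -/
def dExt (n : ℕ) (d : Fin n → ℕ) (i : ℕ) : ℕ :=
  if h : i < n then d ⟨i, h⟩ else 0

/-! ### Auxiliary lemmas -/

lemma df3_step (t : ℕ) : (t+1).descFactorial 3 ≤ t.descFactorial 3 + 3 * t^2 := by
  have h1 : (t+1).descFactorial 3 = (t+1) * t.descFactorial 2 := Nat.succ_descFactorial_succ t 2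
  have h2 : t.descFactorial 3 = (t - 2) * t.descFactorial 2 := Nat.descFactorial_succ t 2
  have h3 : t.descFactorial 2 ≤ t^2 := by
    have := Nat.descFactorial_le_pow t 2
    simpa using this
  rcases Nat.lt_or_ge t 2 with h | h
  · interval_cases t <;> simp [Nat.descFactorial]
  · have : (t+1) * t.descFactorial 2 ≤ (t-2) * t.descFactorial 2 + 3 * t.descFactorial 2 := by
      have h4 : t + 1 ≤ (t - 2) + 3 := by omega
      calc (t+1) * t.descFactorial 2 ≤ ((t-2)+3) * t.descFactorial 2 :=
            Nat.mul_le_mul_right _ h4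
        _ = (t-2) * t.descFactorial 2 + 3 * t.descFactorial 2 := by ring
    calc (t+1).descFactorial 3 = (t+1) * t.descFactorial 2 := h1
      _ ≤ (t-2) * t.descFactorial 2 + 3 * t.descFactorial 2 := this
      _ ≤ t.descFactorial 3 + 3 * t^2 := by
          rw [h2]; exact Nat.add_le_add_left (Nat.mul_le_mul_left _ h3) _

lemma df3_add (s M : ℕ) : (s+M).descFactorial 3 ≤ s.descFactorial 3 + 3*M*(s+M)^2 := by
  induction M with
  | zero => simp
  | succ m ih =>
    have h1 : (s + (m+1)).descFactorial 3 ≤ (s+m).descFactorial 3 + 3 * (s+m)^2 := by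
      have := df3_step (s+m); simpa [← Nat.add_assoc] using this
    have h2 : (s+m)^2 ≤ (s+(m+1))^2 := Nat.pow_le_pow_left (by omega) 2
    have h3 : 3*m*(s+m)^2 ≤ 3*m*(s+(m+1))^2 := Nat.mul_le_mul_left _ h2
    calc (s + (m+1)).descFactorial 3 ≤ (s+m).descFactorial 3 + 3 * (s+m)^2 := h1
      _ ≤ (s.descFactorial 3 + 3*m*(s+m)^2) + 3*(s+m)^2 := Nat.add_le_add_right ih _
      _ ≤ s.descFactorial 3 + 3*(m+1)*(s+(m+1))^2 := by nlinarith [h2, h3]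

lemma card_distinct_triples {α : Type*} [DecidableEq α] (N : Finset α) :
    ((N ×ˢ N ×ˢ N).filter (fun t : α×α×α => t.1 ≠ t.2.1 ∧ t.1 ≠ t.2.2 ∧ t.2.1 ≠ t.2.2)).card
      = N.card.descFactorial 3 := by
  have hcard : Fintype.card (Fin 3 ↪ ↥N) = N.card.descFactorial 3 := by
    rw [Fintype.card_embedding_eq]; simp
  rw [← hcard, ← Finset.card_univ]
  apply Finset.card_bij' (i := fun t ht =>
      (⟨![⟨t.1, by simp at ht; tauto⟩, ⟨t.2.1, by simp at ht; tauto⟩, ⟨t.2.2, by simp at ht; tauto⟩],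
        by
          intro i j hij
          simp only [Finset.mem_filter, Finset.mem_product] at ht
          fin_cases i <;> fin_cases j <;>
            simp_all [Subtype.ext_iff, Matrix.cons_val_zero, Matrix.cons_val_one] ⟩ : Fin 3 ↪ ↥N))
    (j := fun f _ => ((f 0 : α), ((f 1 : α), (f 2 : α))))
  case hi => intro t ht; exact Finset.mem_univ _
  case hj =>
    intro f _
    simp only [Finset.mem_filter, Finset.mem_product]
    refine ⟨⟨(f 0).2, (f 1).2, (f 2).2⟩, ?_, ?_, ?_⟩ <;>
      · intro h
        have := f.injective (Subtype.ext h)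
        simp at this
  case left_inv => intro t ht; rfl
  case right_inv =>
    intro f _
    ext i
    fin_cases i <;> rfl

lemma card_distinct_pairs {α : Type*} [DecidableEq α] (N : Finset α) :
    ((N ×ˢ N).filter (fun t : α×α => t.1 ≠ t.2)).card = N.card.descFactorial 2 := by
  have hcard : Fintype.card (Fin 2 ↪ ↥N) = N.card.descFactorial 2 := by
    rw [Fintype.card_embedding_eq]; simp
  rw [← hcard, ← Finset.card_univ]
  apply Finset.card_bij' (i := fun t ht =>
      (⟨![⟨t.1, by simp at ht; tauto⟩, ⟨t.2, by simp at ht; tauto⟩],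
        by
          intro i j hij
          simp only [Finset.mem_filter, Finset.mem_product] at ht
          fin_cases i <;> fin_cases j <;>
            simp_all [Subtype.ext_iff, Matrix.cons_val_zero, Matrix.cons_val_one] ⟩ : Fin 2 ↪ ↥N))
    (j := fun f _ => ((f 0 : α), (f 1 : α)))
  case hi => intro t ht; exact Finset.mem_univ _
  case hj =>
    intro f _
    simp only [Finset.mem_filter, Finset.mem_product]
    refine ⟨⟨(f 0).2, (f 1).2⟩, ?_⟩
    intro h
    have := f.injective (Subtype.ext h)
    simp at this
  case left_inv => intro t ht; rfl
  case right_inv =>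
    intro f _
    ext i
    fin_cases i <;> rfl

lemma key_sum {n : ℕ} (h m : ℕ) (d : Fin n → ℕ) (hsorted : ∀ i j : Fin n, i ≤ j → d j ≤ d i)
    (C : Finset (Fin n)) (hC : ∀ c ∈ C, h ≤ c.val) (hcard : C.card ≤ m)
    (f : ℕ → ℕ) (hf : Monotone f) :
    ∑ c ∈ C, f (d c) ≤ ∑ i ∈ Finset.range m, f (dExt n d (h + i)) := by
  classical
  set e := C.orderIsoOfFin rfl with he
  have hstep : ∀ k : ℕ, ∀ hk : k < C.card, h + k ≤ (e ⟨k, hk⟩ : Fin n).val := by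
    intro k
    induction k with
    | zero => intro hk; simpa using hC _ (e ⟨0, hk⟩).2
    | succ j ih =>
      intro hk
      have hj : j < C.card := Nat.lt_of_succ_lt hk
      have h1 : (e ⟨j, hj⟩ : Fin n) < (e ⟨j+1, hk⟩ : Fin n) := by
        have : (⟨j, hj⟩ : Fin C.card) < ⟨j+1, hk⟩ := by simp [Fin.lt_def]
        exact_mod_cast e.strictMono this
      have := ih hj
      omega
  have hterm : ∀ k : Fin C.card, f (d (e k)) ≤ f (dExt n d (h + k.val)) := by
    intro k
    have h1 : h + k.val ≤ (e k : Fin n).val := by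
      have := hstep k.val k.isLt; simpa using this
    have h2 : h + k.val < n := lt_of_le_of_lt h1 (e k : Fin n).isLt
    have h3 : dExt n d (h + k.val) = d ⟨h + k.val, h2⟩ := by simp [dExt, h2]
    rw [h3]
    exact hf (hsorted ⟨h + k.val, h2⟩ (e k) h1)
  calc ∑ c ∈ C, f (d c) = ∑ k : Fin C.card, f (d (e k)) := by
        rw [← Finset.sum_attach C (fun c => f (d c))]
        exact (Equiv.sum_comp e.toEquiv (fun c => f (d c.1))).symm
    _ ≤ ∑ k : Fin C.card, f (dExt n d (h + k.val)) := Finset.sum_le_sum (fun k _ => hterm k)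
    _ = ∑ i ∈ Finset.range C.card, f (dExt n d (h + i)) := by
        rw [Finset.sum_range fun i => f (dExt n d (h + i))]
    _ ≤ ∑ i ∈ Finset.range m, f (dExt n d (h + i)) :=
        Finset.sum_le_sum_of_subset (Finset.range_subset_range.2 hcard)

lemma card_fiber_pair {β γ : Type*} [DecidableEq β] [Fintype γ] [DecidableEq γ]
    (P : Finset (β × γ)) (c : β) :
    (P.filter (fun p => p.1 = c)).card = (univ.filter (fun x : γ => (c, x) ∈ P)).card := by
  apply Finset.card_bij' (i := fun p _ => p.2) (j := fun x _ => (c, x))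
  case hi =>
    intro p hp
    simp only [Finset.mem_filter] at hp ⊢
    refine ⟨Finset.mem_univ _, ?_⟩
    have hh : (c, p.2) = p := by
      have := hp.2
      ext <;> simp [this]
    rw [hh]; exact hp.1
  case hj =>
    intro x hx
    simp only [Finset.mem_filter, Finset.mem_univ, true_and] at hx
    exact Finset.mem_filter.2 ⟨hx, rfl⟩
  case left_inv =>
    intro p hp
    simp only [Finset.mem_filter] at hp
    have := hp.2
    ext <;> simp [this]
  case right_inv => intro x _; rfl

lemma card_split {β γ : Type*} [Fintype β] [DecidableEq β] [Fintype γ] [DecidableEq γ]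
    (P : Finset (β × γ)) :
    P.card = ∑ c ∈ univ, (univ.filter (fun x : γ => (c, x) ∈ P)).card := by
  rw [Finset.card_eq_sum_card_fiberwise (f := Prod.fst) (t := univ) (fun x _ => mem_univ _)]
  exact Finset.sum_congr rfl fun c _ => card_fiber_pair P c

lemma Multigraph.deg_split {n : ℕ} (G : Multigraph n) (c : Fin n) (h0 : G.mult c c = 0)
    (hmax : ∀ j, j ≠ c → G.mult c j ≤ 3) :
    G.deg c = (univ.filter (fun j => G.Simple c j)).card
      + (2 * (univ.filter (fun j => G.mult c j = 2)).card
         + 3 * (univ.filter (fun j => G.mult c j = 3)).card) := by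
  have hval : ∀ j : Fin n, G.mult c j = 0 ∨ G.mult c j = 1 ∨ G.mult c j = 2 ∨ G.mult c j = 3 := by
    intro j
    by_cases hj : j = c
    · subst hj; left; exact h0
    · have := hmax j hj; omega
  have hdeg : G.deg c = ∑ j ∈ univ, G.mult c j := by
    unfold Multigraph.deg
    rw [h0]
    have := Finset.sum_filter_add_sum_filter_not univ (fun j => j ≠ c) (fun j => G.mult c j)
    have h2 : ∑ j ∈ univ.filter (fun j => ¬ j ≠ c), G.mult c j = 0 := by
      apply Finset.sum_eq_zero
      intro x hx
      simp only [Finset.mem_filter, not_not] at hx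
      rw [hx.2]; exact h0
    omega
  rw [hdeg]
  have e1 : ∑ j ∈ univ.filter (fun j => G.mult c j = 1), G.mult c j
      = (univ.filter (fun j => G.Simple c j)).card := by
    rw [Finset.sum_congr rfl (fun j hj => (Finset.mem_filter.1 hj).2)]
    simp only [Finset.sum_const, smul_eq_mul, mul_one]
    apply congrArg Finset.card
    ext j
    simp only [Finset.mem_filter, Finset.mem_univ, true_and]
    simp only [Multigraph.Simple]
    constructor
    · intro hm
      refine ⟨fun hcj => ?_, hm⟩
      rw [← hcj] at hm; rw [h0] at hm; exact one_ne_zero hm.symm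
    · tauto
  have e2 : ∑ j ∈ univ.filter (fun j => G.mult c j = 2), G.mult c j
      = 2 * (univ.filter (fun j => G.mult c j = 2)).card := by
    rw [Finset.sum_congr rfl (fun j hj => (Finset.mem_filter.1 hj).2)]
    simp [Finset.sum_const, mul_comm]
  have e3 : ∑ j ∈ univ.filter (fun j => G.mult c j = 3), G.mult c j
      = 3 * (univ.filter (fun j => G.mult c j = 3)).card := by
    rw [Finset.sum_congr rfl (fun j hj => (Finset.mem_filter.1 hj).2)]
    simp [Finset.sum_const, mul_comm]
  have hsplit : ∑ j ∈ univ, G.mult c j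
      = ∑ j ∈ univ.filter (fun j => G.mult c j = 1), G.mult c j
      + (∑ j ∈ univ.filter (fun j => G.mult c j = 2), G.mult c j
        + ∑ j ∈ univ.filter (fun j => G.mult c j = 3), G.mult c j) := by
    have t1 := Finset.sum_filter_add_sum_filter_not univ (fun j => G.mult c j = 1)
      (fun j => G.mult c j)
    have t2 := Finset.sum_filter_add_sum_filter_not (univ.filter (fun j => ¬ G.mult c j = 1))
      (fun j => G.mult c j = 2) (fun j => G.mult c j)
    have t3 := Finset.sum_filter_add_sum_filter_not
      ((univ.filter (fun j => ¬ G.mult c j = 1)).filter (fun j => ¬ G.mult c j = 2))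
      (fun j => G.mult c j = 3) (fun j => G.mult c j)
    have z : ∑ j ∈ (((univ.filter (fun j => ¬ G.mult c j = 1)).filter
        (fun j => ¬ G.mult c j = 2)).filter (fun j => ¬ G.mult c j = 3)), G.mult c j = 0 := by
      apply Finset.sum_eq_zero
      intro x hx
      simp only [Finset.mem_filter] at hx
      rcases hval x with h | h | h | h <;> tauto
    have f2 : (univ.filter (fun j => ¬ G.mult c j = 1)).filter (fun j => G.mult c j = 2)
        = univ.filter (fun j => G.mult c j = 2) := by
      ext j; simp only [Finset.mem_filter, Finset.mem_univ, true_and]; omega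
    have f3 : ((univ.filter (fun j => ¬ G.mult c j = 1)).filter
        (fun j => ¬ G.mult c j = 2)).filter (fun j => G.mult c j = 3)
        = univ.filter (fun j => G.mult c j = 3) := by
      ext j; simp only [Finset.mem_filter, Finset.mem_univ, true_and]; omega
    rw [f2] at t2
    rw [f3] at t3
    omega
  omega

set_option maxHeartbeats 4000000

/-- lower bound on the number of light simple ordered three-stars
compatible with a fixed simple three-star `v₁v₃v₅v₇`.
Here `B_k = Σ_{i=1}^{d₁} [d_{h+i}]_k` and `L₃ = Σ_{light i} [d_i]_3`. -/
theorem stmt12 (n h mt md : ℕ) (G : Multigraph n) (d : Fin n → ℕ)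
    (hdeg : ∀ i, G.deg i = d i)
    (hsorted : ∀ i j : Fin n, i ≤ j → d j ≤ d i)
    (hh1 : 1 ≤ h) (hhn : h ≤ n)
    -- `mt` light triple-edges, `md` light double-edges (counted as ordered endpoint pairs)
    (htriple : (Finset.univ.filter (fun p : Fin n × Fin n =>
        p.1 ≠ p.2 ∧ G.mult p.1 p.2 = 3 ∧ (h ≤ p.1.val ∨ h ≤ p.2.val))).card = 2 * mt)
    (hdouble : (Finset.univ.filter (fun p : Fin n × Fin n =>
        p.1 ≠ p.2 ∧ G.mult p.1 p.2 = 2 ∧ (h ≤ p.1.val ∨ h ≤ p.2.val))).card = 2 * md)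
    -- no other non-simple edges
    (hnoloop : ∀ i : Fin n, G.mult i i = 0)
    (hmax : ∀ i j : Fin n, i ≠ j → G.mult i j ≤ 3)
    (hmultilight : ∀ i j : Fin n, i ≠ j → 2 ≤ G.mult i j → (h ≤ i.val ∨ h ≤ j.val))
    -- a fixed simple three-star v₁v₃v₅v₇
    (v1 v3 v5 v7 : Fin n)
    (hs13 : G.Simple v1 v3) (hs15 : G.Simple v1 v5) (hs17 : G.Simple v1 v7)
    (hne1 : v3 ≠ v5) (hne2 : v3 ≠ v7) (hne3 : v5 ≠ v7) :
    ((∑ i ∈ Finset.univ.filter (fun i : Fin n => h ≤ i.val),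
        Nat.descFactorial (d i) 3 : ℕ) : ℤ)
      - 18 * (mt : ℤ) * (dExt n d (h - 1) : ℤ) ^ 2
      - 12 * (md : ℤ) * (dExt n d (h - 1) : ℤ) ^ 2
      - ((∑ i ∈ Finset.range (dExt n d 0), Nat.descFactorial (dExt n d (h + i)) 3 : ℕ) : ℤ)
      - 3 * ((mt : ℤ) + (md : ℤ))
          * ((∑ i ∈ Finset.range (dExt n d 0), Nat.descFactorial (dExt n d (h + i)) 2 : ℕ) : ℤ)
      - (dExt n d (h - 1) : ℤ) ^ 3
      - 9 * ((∑ i ∈ Finset.range (dExt n d 0), Nat.descFactorial (dExt n d (h + i)) 2 : ℕ) : ℤ)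
    ≤ ((Finset.univ.filter (fun t : Fin n × Fin n × Fin n × Fin n =>
        h ≤ t.1.val ∧
        G.Simple t.1 t.2.1 ∧ G.Simple t.1 t.2.2.1 ∧ G.Simple t.1 t.2.2.2 ∧
        t.2.1 ≠ t.2.2.1 ∧ t.2.1 ≠ t.2.2.2 ∧ t.2.2.1 ≠ t.2.2.2 ∧
        t.1 ≠ v1 ∧ t.1 ≠ v3 ∧ t.1 ≠ v5 ∧ t.1 ≠ v7 ∧
        t.2.1 ≠ v1 ∧ t.2.1 ≠ v3 ∧ t.2.1 ≠ v5 ∧ t.2.1 ≠ v7 ∧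
        t.2.2.1 ≠ v1 ∧ t.2.2.1 ≠ v3 ∧ t.2.2.1 ≠ v5 ∧ t.2.2.1 ≠ v7 ∧
        t.2.2.2 ≠ v1 ∧ t.2.2.2 ≠ v3 ∧ t.2.2.2 ≠ v5 ∧ t.2.2.2 ≠ v7 ∧
        G.mult v1 t.1 = 0 ∧
        G.mult v3 t.2.1 ≤ 1 ∧ G.mult v5 t.2.2.1 ≤ 1 ∧ G.mult v7 t.2.2.2 ≤ 1)).card : ℤ) := by
  classical
  have hn0 : 0 < n := lt_of_lt_of_le hh1 hhn
  have hh1n : h - 1 < n := by omega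
  set d1 := dExt n d 0 with hd1_def
  set dh := dExt n d (h - 1) with hdh_def
  set B3 := ∑ i ∈ Finset.range d1, Nat.descFactorial (dExt n d (h + i)) 3 with hB3_def
  set B2 := ∑ i ∈ Finset.range d1, Nat.descFactorial (dExt n d (h + i)) 2 with hB2_def
  set L3 := ∑ i ∈ Finset.univ.filter (fun i : Fin n => h ≤ i.val),
      Nat.descFactorial (d i) 3 with hL3_def
  set T := Finset.univ.filter (fun t : Fin n × Fin n × Fin n × Fin n =>
        h ≤ t.1.val ∧
        G.Simple t.1 t.2.1 ∧ G.Simple t.1 t.2.2.1 ∧ G.Simple t.1 t.2.2.2 ∧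
        t.2.1 ≠ t.2.2.1 ∧ t.2.1 ≠ t.2.2.2 ∧ t.2.2.1 ≠ t.2.2.2 ∧
        t.1 ≠ v1 ∧ t.1 ≠ v3 ∧ t.1 ≠ v5 ∧ t.1 ≠ v7 ∧
        t.2.1 ≠ v1 ∧ t.2.1 ≠ v3 ∧ t.2.1 ≠ v5 ∧ t.2.1 ≠ v7 ∧
        t.2.2.1 ≠ v1 ∧ t.2.2.1 ≠ v3 ∧ t.2.2.1 ≠ v5 ∧ t.2.2.1 ≠ v7 ∧
        t.2.2.2 ≠ v1 ∧ t.2.2.2 ≠ v3 ∧ t.2.2.2 ≠ v5 ∧ t.2.2.2 ≠ v7 ∧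
        G.mult v1 t.1 = 0 ∧
        G.mult v3 t.2.1 ≤ 1 ∧ G.mult v5 t.2.2.1 ≤ 1 ∧ G.mult v7 t.2.2.2 ≤ 1) with hT_def
  suffices hnat : L3 ≤ T.card +
      (18 * mt * dh ^ 2 + 12 * md * dh ^ 2 + B3 + 3 * (mt + md) * B2 + dh ^ 3 + 9 * B2) by
    have h' : (L3 : ℤ) ≤ (T.card : ℤ) +
        (18 * (mt : ℤ) * (dh : ℤ) ^ 2 + 12 * (md : ℤ) * (dh : ℤ) ^ 2 + (B3 : ℤ)
          + 3 * ((mt : ℤ) + (md : ℤ)) * (B2 : ℤ) + (dh : ℤ) ^ 3 + 9 * (B2 : ℤ)) := by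
      exact_mod_cast hnat
    linarith
  -- basic facts
  have hdh_eq : dh = d ⟨h - 1, hh1n⟩ := by rw [hdh_def]; simp [dExt, hh1n]
  have hd1_eq : d1 = d ⟨0, hn0⟩ := by rw [hd1_def]; simp [dExt, hn0]
  have hlight_dh : ∀ c : Fin n, h ≤ c.val → d c ≤ dh := by
    intro c hc
    rw [hdh_eq]
    exact hsorted ⟨h - 1, hh1n⟩ c (by simp only [Fin.le_def]; omega)
  have hd_le_d1 : ∀ w : Fin n, d w ≤ d1 := by
    intro w
    rw [hd1_eq]
    exact hsorted ⟨0, hn0⟩ w (by simp only [Fin.le_def]; omega)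
  have hnbr_card : ∀ w : Fin n, (univ.filter (fun c => G.mult w c ≠ 0)).card ≤ d w := by
    intro w
    have h1 : (univ.filter (fun c => G.mult w c ≠ 0)).card
        ≤ ∑ j ∈ univ.filter (fun c => G.mult w c ≠ 0), G.mult w j := by
      rw [Finset.card_eq_sum_ones]
      apply Finset.sum_le_sum
      intro x hx
      simp only [Finset.mem_filter] at hx
      omega
    have h2 : ∑ j ∈ univ.filter (fun c => G.mult w c ≠ 0), G.mult w j
        ≤ ∑ j ∈ univ.filter (fun j => j ≠ w), G.mult w j := by
      apply Finset.sum_le_sum_of_subset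
      intro x hx
      simp only [Finset.mem_filter, Finset.mem_univ, true_and] at hx ⊢
      intro hxw; rw [hxw] at hx; exact hx (hnoloop _)
    have h3 : G.deg w = 2 * G.mult w w + ∑ j ∈ univ.filter (fun j => j ≠ w), G.mult w j := rfl
    rw [← hdeg w]
    rw [h3, hnoloop w]
    omega
  -- the set of light simple ordered three-stars
  set S : Finset (Fin n × Fin n × Fin n × Fin n) := univ.filter
      (fun t => h ≤ t.1.val ∧ G.Simple t.1 t.2.1 ∧ G.Simple t.1 t.2.2.1 ∧ G.Simple t.1 t.2.2.2 ∧
        t.2.1 ≠ t.2.2.1 ∧ t.2.1 ≠ t.2.2.2 ∧ t.2.2.1 ≠ t.2.2.2) with hS_def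
  have memS : ∀ (c : Fin n) (p : Fin n × Fin n × Fin n), ((c, p) ∈ S) ↔
      (h ≤ c.val ∧ G.Simple c p.1 ∧ G.Simple c p.2.1 ∧ G.Simple c p.2.2 ∧
        p.1 ≠ p.2.1 ∧ p.1 ≠ p.2.2 ∧ p.2.1 ≠ p.2.2) := by
    intro c p
    rw [hS_def]
    simp only [Finset.mem_filter, Finset.mem_univ, true_and]
  have hTsubS : T ⊆ S := by
    intro t ht
    rw [hT_def] at ht
    rw [hS_def]
    simp only [Finset.mem_filter, Finset.mem_univ, true_and] at ht ⊢
    tauto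
  set Nc : Fin n → Finset (Fin n) := fun c => univ.filter (fun j => G.Simple c j) with hNc_def
  have hMsum : ∀ c : Fin n, d c = (Nc c).card
      + (2 * (univ.filter (fun j => G.mult c j = 2)).card
         + 3 * (univ.filter (fun j => G.mult c j = 3)).card) := by
    intro c
    rw [← hdeg c]
    exact G.deg_split c (hnoloop c) (fun j hj => hmax c j (Ne.symm hj))
  have hNc_le : ∀ c : Fin n, (Nc c).card ≤ d c := by
    intro c
    have := hMsum c
    omega
  have fiber_sub : ∀ c : Fin n,
      (univ.filter (fun p : Fin n × Fin n × Fin n => (c, p) ∈ S))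
        ⊆ ((Nc c ×ˢ Nc c ×ˢ Nc c).filter
            (fun t => t.1 ≠ t.2.1 ∧ t.1 ≠ t.2.2 ∧ t.2.1 ≠ t.2.2)) := by
    intro c p hp
    simp only [Finset.mem_filter, Finset.mem_univ, true_and] at hp
    rw [memS] at hp
    simp only [Finset.mem_filter, Finset.mem_product, hNc_def, Finset.mem_univ, true_and]
    tauto
  have fiber_eq : ∀ c : Fin n, h ≤ c.val →
      (univ.filter (fun p : Fin n × Fin n × Fin n => (c, p) ∈ S))
        = ((Nc c ×ˢ Nc c ×ˢ Nc c).filter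
            (fun t => t.1 ≠ t.2.1 ∧ t.1 ≠ t.2.2 ∧ t.2.1 ≠ t.2.2)) := by
    intro c hc
    apply Finset.Subset.antisymm (fiber_sub c)
    intro p hp
    simp only [Finset.mem_filter, Finset.mem_product, hNc_def, Finset.mem_univ, true_and] at hp
    simp only [Finset.mem_filter, Finset.mem_univ, true_and]
    rw [memS]
    tauto
  have fiber_card_eq : ∀ c : Fin n, h ≤ c.val →
      (univ.filter (fun p : Fin n × Fin n × Fin n => (c, p) ∈ S)).card
        = (Nc c).card.descFactorial 3 := by
    intro c hc
    rw [fiber_eq c hc, card_distinct_triples]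
  have fiber_card_le : ∀ c : Fin n,
      (univ.filter (fun p : Fin n × Fin n × Fin n => (c, p) ∈ S)).card
        ≤ (d c).descFactorial 3 := by
    intro c
    calc (univ.filter (fun p : Fin n × Fin n × Fin n => (c, p) ∈ S)).card
        ≤ ((Nc c ×ˢ Nc c ×ˢ Nc c).filter
            (fun t => t.1 ≠ t.2.1 ∧ t.1 ≠ t.2.2 ∧ t.2.1 ≠ t.2.2)).card :=
          Finset.card_le_card (fiber_sub c)
      _ = (Nc c).card.descFactorial 3 := card_distinct_triples _
      _ ≤ (d c).descFactorial 3 := Nat.descFactorial_le 3 (hNc_le c)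
  have keyB3 : ∀ C : Finset (Fin n), (∀ c ∈ C, h ≤ c.val) → C.card ≤ d1 →
      (∑ c ∈ C, (d c).descFactorial 3) ≤ B3 := by
    intro C hC hcard
    rw [hB3_def]
    exact key_sum h d1 d hsorted C hC hcard (fun x => x.descFactorial 3)
      (fun a b hab => Nat.descFactorial_le 3 hab)
  have keyB2 : ∀ C : Finset (Fin n), (∀ c ∈ C, h ≤ c.val) → C.card ≤ d1 →
      (∑ c ∈ C, (d c).descFactorial 2) ≤ B2 := by
    intro C hC hcard
    rw [hB2_def]
    exact key_sum h d1 d hsorted C hC hcard (fun x => x.descFactorial 2)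
      (fun a b hab => Nat.descFactorial_le 2 hab)
  have hcenters : ∀ w : Fin n,
      (univ.filter (fun c : Fin n => h ≤ c.val ∧ G.mult w c ≠ 0)).card ≤ d1 := by
    intro w
    calc (univ.filter (fun c : Fin n => h ≤ c.val ∧ G.mult w c ≠ 0)).card
        ≤ (univ.filter (fun c : Fin n => G.mult w c ≠ 0)).card := by
          apply Finset.card_le_card
          intro c hc
          simp only [Finset.mem_filter, Finset.mem_univ, true_and] at hc ⊢
          exact hc.2
      _ ≤ d w := hnbr_card w
      _ ≤ d1 := hd_le_d1 w
  -- generic event bound via fibering over centers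
  have event_sum : ∀ (E : Finset (Fin n × (Fin n × Fin n × Fin n))) (C : Finset (Fin n))
      (g : Fin n → ℕ),
      (∀ c p, (c, p) ∈ E → c ∈ C) →
      (∀ c, (univ.filter (fun p : Fin n × Fin n × Fin n => (c, p) ∈ E)).card ≤ g c) →
      E.card ≤ ∑ c ∈ C, g c := by
    intro E C g hmem hbound
    rw [card_split E]
    have hz : ∑ c ∈ univ, (univ.filter (fun p : Fin n × Fin n × Fin n => (c, p) ∈ E)).card
        = ∑ c ∈ C, (univ.filter (fun p : Fin n × Fin n × Fin n => (c, p) ∈ E)).card := by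
      symm
      apply Finset.sum_subset (Finset.subset_univ C)
      intro c _ hc
      rw [Finset.card_eq_zero, Finset.filter_eq_empty_iff]
      intro p _
      exact fun hp => hc (hmem c p hp)
    rw [hz]
    exact Finset.sum_le_sum (fun c _ => hbound c)
  -- counting light multi-edge endpoints
  have hsum3 : ∑ c ∈ univ.filter (fun c : Fin n => h ≤ c.val),
      (univ.filter (fun j => G.mult c j = 3)).card ≤ 2 * mt := by
    set P3' := univ.filter (fun p : Fin n × Fin n => h ≤ p.1.val ∧ G.mult p.1 p.2 = 3)
      with hP3'
    have e1 : ∀ c : Fin n, h ≤ c.val →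
        (univ.filter (fun x : Fin n => (c, x) ∈ P3')) = univ.filter (fun j => G.mult c j = 3) := by
      intro c hc
      ext x
      rw [hP3']
      simp only [Finset.mem_filter, Finset.mem_univ, true_and]
      tauto
    calc ∑ c ∈ univ.filter (fun c : Fin n => h ≤ c.val),
          (univ.filter (fun j => G.mult c j = 3)).card
        = ∑ c ∈ univ.filter (fun c : Fin n => h ≤ c.val),
          (univ.filter (fun x : Fin n => (c, x) ∈ P3')).card := by
          apply Finset.sum_congr rfl
          intro c hc
          simp only [Finset.mem_filter, Finset.mem_univ, true_and] at hc
          rw [e1 c hc]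
      _ ≤ ∑ c ∈ univ, (univ.filter (fun x : Fin n => (c, x) ∈ P3')).card :=
          Finset.sum_le_sum_of_subset (Finset.subset_univ _)
      _ = P3'.card := (card_split P3').symm
      _ ≤ 2 * mt := by
          rw [← htriple]
          apply Finset.card_le_card
          intro p hp
          rw [hP3'] at hp
          simp only [Finset.mem_filter, Finset.mem_univ, true_and] at hp ⊢
          refine ⟨?_, hp.2, Or.inl hp.1⟩
          intro heq
          rw [heq] at hp
          rw [hnoloop p.2] at hp
          omega
  have hsum2 : ∑ c ∈ univ.filter (fun c : Fin n => h ≤ c.val),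
      (univ.filter (fun j => G.mult c j = 2)).card ≤ 2 * md := by
    set P2' := univ.filter (fun p : Fin n × Fin n => h ≤ p.1.val ∧ G.mult p.1 p.2 = 2)
      with hP2'
    have e1 : ∀ c : Fin n, h ≤ c.val →
        (univ.filter (fun x : Fin n => (c, x) ∈ P2')) = univ.filter (fun j => G.mult c j = 2) := by
      intro c hc
      ext x
      rw [hP2']
      simp only [Finset.mem_filter, Finset.mem_univ, true_and]
      tauto
    calc ∑ c ∈ univ.filter (fun c : Fin n => h ≤ c.val),
          (univ.filter (fun j => G.mult c j = 2)).card
        = ∑ c ∈ univ.filter (fun c : Fin n => h ≤ c.val),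
          (univ.filter (fun x : Fin n => (c, x) ∈ P2')).card := by
          apply Finset.sum_congr rfl
          intro c hc
          simp only [Finset.mem_filter, Finset.mem_univ, true_and] at hc
          rw [e1 c hc]
      _ ≤ ∑ c ∈ univ, (univ.filter (fun x : Fin n => (c, x) ∈ P2')).card :=
          Finset.sum_le_sum_of_subset (Finset.subset_univ _)
      _ = P2'.card := (card_split P2').symm
      _ ≤ 2 * md := by
          rw [← hdouble]
          apply Finset.card_le_card
          intro p hp
          rw [hP2'] at hp
          simp only [Finset.mem_filter, Finset.mem_univ, true_and] at hp ⊢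
          refine ⟨?_, hp.2, Or.inl hp.1⟩
          intro heq
          rw [heq] at hp
          rw [hnoloop p.2] at hp
          omega
  -- Part A : L3 is at most |S| plus multi-edge corrections
  have partA : L3 ≤ S.card + (18 * mt * dh ^ 2 + 12 * md * dh ^ 2) := by
    have hA1 : ∀ c ∈ univ.filter (fun c : Fin n => h ≤ c.val),
        (d c).descFactorial 3
          ≤ (univ.filter (fun p : Fin n × Fin n × Fin n => (c, p) ∈ S)).card
            + (6 * dh ^ 2 * (univ.filter (fun j => G.mult c j = 2)).card
              + 9 * dh ^ 2 * (univ.filter (fun j => G.mult c j = 3)).card) := by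
      intro c hc
      simp only [Finset.mem_filter, Finset.mem_univ, true_and] at hc
      set M := 2 * (univ.filter (fun j => G.mult c j = 2)).card
          + 3 * (univ.filter (fun j => G.mult c j = 3)).card with hM
      have e := hMsum c
      have h1 : (d c).descFactorial 3 ≤ (Nc c).card.descFactorial 3 + 3 * M * (d c) ^ 2 := by
        calc (d c).descFactorial 3 = ((Nc c).card + M).descFactorial 3 := by rw [← e]
          _ ≤ (Nc c).card.descFactorial 3 + 3 * M * ((Nc c).card + M) ^ 2 := df3_add _ _
          _ = (Nc c).card.descFactorial 3 + 3 * M * (d c) ^ 2 := by rw [← e]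
      have h2 : (d c) ^ 2 ≤ dh ^ 2 := Nat.pow_le_pow_left (hlight_dh c hc) 2
      have h3 : (d c).descFactorial 3
          ≤ (univ.filter (fun p : Fin n × Fin n × Fin n => (c, p) ∈ S)).card
            + 3 * M * dh ^ 2 := by
        rw [fiber_card_eq c hc]
        calc (d c).descFactorial 3 ≤ (Nc c).card.descFactorial 3 + 3 * M * (d c) ^ 2 := h1
          _ ≤ (Nc c).card.descFactorial 3 + 3 * M * dh ^ 2 :=
              Nat.add_le_add_left (Nat.mul_le_mul_left _ h2) _
      calc (d c).descFactorial 3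
          ≤ (univ.filter (fun p : Fin n × Fin n × Fin n => (c, p) ∈ S)).card
            + 3 * M * dh ^ 2 := h3
        _ = (univ.filter (fun p : Fin n × Fin n × Fin n => (c, p) ∈ S)).card
            + (6 * dh ^ 2 * (univ.filter (fun j => G.mult c j = 2)).card
              + 9 * dh ^ 2 * (univ.filter (fun j => G.mult c j = 3)).card) := by
            rw [hM]; ring
    calc L3 ≤ ∑ c ∈ univ.filter (fun c : Fin n => h ≤ c.val),
          ((univ.filter (fun p : Fin n × Fin n × Fin n => (c, p) ∈ S)).card
            + (6 * dh ^ 2 * (univ.filter (fun j => G.mult c j = 2)).card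
              + 9 * dh ^ 2 * (univ.filter (fun j => G.mult c j = 3)).card)) := by
          rw [hL3_def]
          exact Finset.sum_le_sum hA1
      _ = ∑ c ∈ univ.filter (fun c : Fin n => h ≤ c.val),
            (univ.filter (fun p : Fin n × Fin n × Fin n => (c, p) ∈ S)).card
          + (6 * dh ^ 2 * ∑ c ∈ univ.filter (fun c : Fin n => h ≤ c.val),
              (univ.filter (fun j => G.mult c j = 2)).card
            + 9 * dh ^ 2 * ∑ c ∈ univ.filter (fun c : Fin n => h ≤ c.val),
              (univ.filter (fun j => G.mult c j = 3)).card) := by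
          rw [Finset.sum_add_distrib, Finset.sum_add_distrib, Finset.mul_sum, Finset.mul_sum]
      _ ≤ S.card + (6 * dh ^ 2 * (2 * md) + 9 * dh ^ 2 * (2 * mt)) := by
          apply Nat.add_le_add
          · rw [card_split S]
            exact Finset.sum_le_sum_of_subset (Finset.subset_univ _)
          · exact Nat.add_le_add (Nat.mul_le_mul_left _ hsum2) (Nat.mul_le_mul_left _ hsum3)
      _ = S.card + (18 * mt * dh ^ 2 + 12 * md * dh ^ 2) := by ring
  -- bound for stars whose center is adjacent to a fixed node
  have Ebound : ∀ w : Fin n,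
      (S.filter (fun t => G.mult w t.1 ≠ 0)).card ≤ B3 := by
    intro w
    have h1 : (S.filter (fun t => G.mult w t.1 ≠ 0)).card
        ≤ ∑ c ∈ univ.filter (fun c : Fin n => h ≤ c.val ∧ G.mult w c ≠ 0),
            (d c).descFactorial 3 := by
      apply event_sum
      · intro c p hp
        simp only [Finset.mem_filter] at hp
        rw [memS] at hp
        simp only [Finset.mem_filter, Finset.mem_univ, true_and]
        exact ⟨hp.1.1, hp.2⟩
      · intro c
        calc (univ.filter (fun p : Fin n × Fin n × Fin n =>
              (c, p) ∈ S.filter (fun t => G.mult w t.1 ≠ 0))).card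
            ≤ (univ.filter (fun p : Fin n × Fin n × Fin n => (c, p) ∈ S)).card := by
              apply Finset.card_le_card
              intro p hp
              simp only [Finset.mem_filter] at hp ⊢
              exact ⟨hp.1, hp.2.1⟩
          _ ≤ (d c).descFactorial 3 := fiber_card_le c
    refine h1.trans (keyB3 _ ?_ (hcenters w))
    intro c hc
    simp only [Finset.mem_filter, Finset.mem_univ, true_and] at hc
    exact hc.1
  -- bound for stars with a fixed outer node, one lemma per position
  have Fbound1 : ∀ u : Fin n,
      (S.filter (fun t => t.2.1 = u)).card ≤ B2 := by
    intro u
    have h1 : (S.filter (fun t => t.2.1 = u)).card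
        ≤ ∑ c ∈ univ.filter (fun c : Fin n => h ≤ c.val ∧ G.mult u c ≠ 0),
            (d c).descFactorial 2 := by
      apply event_sum
      · intro c p hp
        simp only [Finset.mem_filter] at hp
        rw [memS] at hp
        obtain ⟨⟨hc, hs1, _⟩, hpu⟩ := hp
        simp only [Finset.mem_filter, Finset.mem_univ, true_and]
        refine ⟨hc, ?_⟩
        rw [hpu] at hs1
        rw [G.symm u c, hs1.2]
        omega
      · intro c
        calc (univ.filter (fun p : Fin n × Fin n × Fin n =>
              (c, p) ∈ S.filter (fun t => t.2.1 = u))).card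
            ≤ ((Nc c ×ˢ Nc c).filter (fun q : Fin n × Fin n => q.1 ≠ q.2)).card := by
              apply Finset.card_le_card_of_injOn (fun p => (p.2.1, p.2.2))
              · intro p hp
                simp only [Finset.mem_coe, Finset.mem_filter, Finset.mem_univ, true_and] at hp
                obtain ⟨hpS, _⟩ := hp
                rw [memS] at hpS
                simp only [Finset.mem_coe, Finset.mem_filter, Finset.mem_product, hNc_def,
                  Finset.mem_univ, true_and]
                tauto
              · intro p hp q hq hpq
                simp only [Finset.coe_filter, Set.mem_setOf_eq, Finset.mem_univ,
                  true_and, Finset.mem_filter] at hp hq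
                simp only [Prod.mk.injEq] at hpq
                have h1 : p.1 = q.1 := by rw [hp.2, hq.2]
                exact Prod.ext h1 (Prod.ext hpq.1 hpq.2)
          _ = (Nc c).card.descFactorial 2 := card_distinct_pairs _
          _ ≤ (d c).descFactorial 2 := Nat.descFactorial_le 2 (hNc_le c)
    refine h1.trans (keyB2 _ ?_ (hcenters u))
    intro c hc
    simp only [Finset.mem_filter, Finset.mem_univ, true_and] at hc
    exact hc.1
  have Fbound2 : ∀ u : Fin n,
      (S.filter (fun t => t.2.2.1 = u)).card ≤ B2 := by
    intro u
    have h1 : (S.filter (fun t => t.2.2.1 = u)).card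
        ≤ ∑ c ∈ univ.filter (fun c : Fin n => h ≤ c.val ∧ G.mult u c ≠ 0),
            (d c).descFactorial 2 := by
      apply event_sum
      · intro c p hp
        simp only [Finset.mem_filter] at hp
        rw [memS] at hp
        obtain ⟨⟨hc, _, hs2, _⟩, hpu⟩ := hp
        simp only [Finset.mem_filter, Finset.mem_univ, true_and]
        refine ⟨hc, ?_⟩
        rw [hpu] at hs2
        rw [G.symm u c, hs2.2]
        omega
      · intro c
        calc (univ.filter (fun p : Fin n × Fin n × Fin n =>
              (c, p) ∈ S.filter (fun t => t.2.2.1 = u))).card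
            ≤ ((Nc c ×ˢ Nc c).filter (fun q : Fin n × Fin n => q.1 ≠ q.2)).card := by
              apply Finset.card_le_card_of_injOn (fun p => (p.1, p.2.2))
              · intro p hp
                simp only [Finset.mem_coe, Finset.mem_filter, Finset.mem_univ, true_and] at hp
                obtain ⟨hpS, _⟩ := hp
                rw [memS] at hpS
                simp only [Finset.mem_coe, Finset.mem_filter, Finset.mem_product, hNc_def,
                  Finset.mem_univ, true_and]
                tauto
              · intro p hp q hq hpq
                simp only [Finset.coe_filter, Set.mem_setOf_eq, Finset.mem_univ,
                  true_and, Finset.mem_filter] at hp hq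
                simp only [Prod.mk.injEq] at hpq
                have h2 : p.2.1 = q.2.1 := by rw [hp.2, hq.2]
                exact Prod.ext hpq.1 (Prod.ext h2 hpq.2)
          _ = (Nc c).card.descFactorial 2 := card_distinct_pairs _
          _ ≤ (d c).descFactorial 2 := Nat.descFactorial_le 2 (hNc_le c)
    refine h1.trans (keyB2 _ ?_ (hcenters u))
    intro c hc
    simp only [Finset.mem_filter, Finset.mem_univ, true_and] at hc
    exact hc.1
  have Fbound3 : ∀ u : Fin n,
      (S.filter (fun t => t.2.2.2 = u)).card ≤ B2 := by
    intro u
    have h1 : (S.filter (fun t => t.2.2.2 = u)).card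
        ≤ ∑ c ∈ univ.filter (fun c : Fin n => h ≤ c.val ∧ G.mult u c ≠ 0),
            (d c).descFactorial 2 := by
      apply event_sum
      · intro c p hp
        simp only [Finset.mem_filter] at hp
        rw [memS] at hp
        obtain ⟨⟨hc, _, _, hs3, _⟩, hpu⟩ := hp
        simp only [Finset.mem_filter, Finset.mem_univ, true_and]
        refine ⟨hc, ?_⟩
        rw [hpu] at hs3
        rw [G.symm u c, hs3.2]
        omega
      · intro c
        calc (univ.filter (fun p : Fin n × Fin n × Fin n =>
              (c, p) ∈ S.filter (fun t => t.2.2.2 = u))).card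
            ≤ ((Nc c ×ˢ Nc c).filter (fun q : Fin n × Fin n => q.1 ≠ q.2)).card := by
              apply Finset.card_le_card_of_injOn (fun p => (p.1, p.2.1))
              · intro p hp
                simp only [Finset.mem_coe, Finset.mem_filter, Finset.mem_univ, true_and] at hp
                obtain ⟨hpS, _⟩ := hp
                rw [memS] at hpS
                simp only [Finset.mem_coe, Finset.mem_filter, Finset.mem_product, hNc_def,
                  Finset.mem_univ, true_and]
                tauto
              · intro p hp q hq hpq
                simp only [Finset.coe_filter, Set.mem_setOf_eq, Finset.mem_univ,
                  true_and, Finset.mem_filter] at hp hq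
                simp only [Prod.mk.injEq] at hpq
                have h3 : p.2.2 = q.2.2 := by rw [hp.2, hq.2]
                exact Prod.ext hpq.1 (Prod.ext hpq.2 h3)
          _ = (Nc c).card.descFactorial 2 := card_distinct_pairs _
          _ ≤ (d c).descFactorial 2 := Nat.descFactorial_le 2 (hNc_le c)
    refine h1.trans (keyB2 _ ?_ (hcenters u))
    intro c hc
    simp only [Finset.mem_filter, Finset.mem_univ, true_and] at hc
    exact hc.1
  -- number of multi-edge neighbors of a fixed node
  have hU : ∀ w : Fin n, (univ.filter (fun u => 2 ≤ G.mult w u)).card ≤ mt + md := by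
    intro w
    set U := univ.filter (fun u => 2 ≤ G.mult w u) with hU_def
    have hUne : ∀ u ∈ U, u ≠ w := by
      intro u hu
      rw [hU_def] at hu
      simp only [Finset.mem_filter, Finset.mem_univ, true_and] at hu
      intro he; rw [he, hnoloop w] at hu; omega
    set P3 := Finset.univ.filter (fun p : Fin n × Fin n =>
        p.1 ≠ p.2 ∧ G.mult p.1 p.2 = 3 ∧ (h ≤ p.1.val ∨ h ≤ p.2.val)) with hP3_def
    set P2 := Finset.univ.filter (fun p : Fin n × Fin n =>
        p.1 ≠ p.2 ∧ G.mult p.1 p.2 = 2 ∧ (h ≤ p.1.val ∨ h ≤ p.2.val)) with hP2_def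
    have hinj : ((univ : Finset Bool) ×ˢ U).card ≤ (P3 ∪ P2).card := by
      apply Finset.card_le_card_of_injOn
        (fun b : Bool × Fin n => if b.1 then (w, b.2) else (b.2, w))
      · rintro ⟨b, u⟩ hb
        simp only [Finset.mem_coe, Finset.mem_product, Finset.mem_univ, true_and, hU_def,
          Finset.mem_filter] at hb
        have hne : w ≠ u := fun he => by rw [he, hnoloop u] at hb; omega
        have h23 : G.mult w u = 2 ∨ G.mult w u = 3 := by
          have := hmax w u hne; omega
        have hlight : h ≤ w.val ∨ h ≤ u.val := hmultilight w u hne (by omega)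
        have hmem3 : G.mult w u = 3 → (w, u) ∈ P3 ∧ (u, w) ∈ P3 := by
          intro h3
          rw [hP3_def]
          constructor <;> simp only [Finset.mem_filter, Finset.mem_univ, true_and]
          · exact ⟨hne, h3, hlight⟩
          · exact ⟨hne.symm, by rw [G.symm u w]; exact h3, hlight.symm⟩
        have hmem2 : G.mult w u = 2 → (w, u) ∈ P2 ∧ (u, w) ∈ P2 := by
          intro h2
          rw [hP2_def]
          constructor <;> simp only [Finset.mem_filter, Finset.mem_univ, true_and]
          · exact ⟨hne, h2, hlight⟩
          · exact ⟨hne.symm, by rw [G.symm u w]; exact h2, hlight.symm⟩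
        rw [Finset.mem_coe, Finset.mem_union]
        cases b <;> simp only [if_true, if_false, Bool.false_eq_true, ite_true, ite_false]
        · rcases h23 with h2 | h3
          · exact Or.inr (hmem2 h2).2
          · exact Or.inl (hmem3 h3).2
        · rcases h23 with h2 | h3
          · exact Or.inr (hmem2 h2).1
          · exact Or.inl (hmem3 h3).1
      · rintro ⟨b, u⟩ hb ⟨b', u'⟩ hb' heq
        simp only [Finset.coe_product, Set.mem_prod, Finset.mem_coe,
          Finset.mem_univ, true_and] at hb hb'
        have hu : u ≠ w := hUne u hb
        have hu' : u' ≠ w := hUne u' hb'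
        cases b <;> cases b' <;>
          simp only [if_true, if_false, Bool.false_eq_true, ite_true, ite_false,
            Prod.mk.injEq] at heq
        · exact by rw [heq.1]
        · exact absurd heq.1 hu
        · exact absurd heq.1.symm hu'
        · exact by rw [heq.2]
    have hcards : ((univ : Finset Bool) ×ˢ U).card = 2 * U.card := by
      rw [Finset.card_product, Finset.card_univ, Fintype.card_bool]
    have hdisj : Disjoint P3 P2 := by
      rw [Finset.disjoint_left]
      intro p hp3 hp2
      rw [hP3_def] at hp3; rw [hP2_def] at hp2
      simp only [Finset.mem_filter] at hp3 hp2
      omega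
    have hunion : (P3 ∪ P2).card = 2 * mt + 2 * md := by
      rw [Finset.card_union_of_disjoint hdisj]
      rw [hP3_def, hP2_def, htriple, hdouble]
    omega
  -- bound for stars with a multi-edge between a fixed node and an outer node
  have Gbound1 : ∀ w : Fin n,
      (S.filter (fun t => 2 ≤ G.mult w t.2.1)).card ≤ (mt + md) * B2 := by
    intro w
    have hsub : S.filter (fun t => 2 ≤ G.mult w t.2.1)
        ⊆ (univ.filter (fun u => 2 ≤ G.mult w u)).biUnion
            (fun u => S.filter (fun t => t.2.1 = u)) := by
      intro t ht
      simp only [Finset.mem_filter] at ht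
      rw [Finset.mem_biUnion]
      exact ⟨t.2.1, by simp only [Finset.mem_filter, Finset.mem_univ, true_and]; exact ht.2,
        Finset.mem_filter.2 ⟨ht.1, rfl⟩⟩
    calc (S.filter (fun t => 2 ≤ G.mult w t.2.1)).card
        ≤ ((univ.filter (fun u => 2 ≤ G.mult w u)).biUnion
            (fun u => S.filter (fun t => t.2.1 = u))).card := Finset.card_le_card hsub
      _ ≤ ∑ u ∈ univ.filter (fun u => 2 ≤ G.mult w u), (S.filter (fun t => t.2.1 = u)).card :=
          Finset.card_biUnion_le
      _ ≤ ∑ _u ∈ univ.filter (fun u => 2 ≤ G.mult w u), B2 :=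
          Finset.sum_le_sum (fun u _ => Fbound1 u)
      _ = (univ.filter (fun u => 2 ≤ G.mult w u)).card * B2 := by
          rw [Finset.sum_const, smul_eq_mul]
      _ ≤ (mt + md) * B2 := Nat.mul_le_mul_right _ (hU w)
  have Gbound2 : ∀ w : Fin n,
      (S.filter (fun t => 2 ≤ G.mult w t.2.2.1)).card ≤ (mt + md) * B2 := by
    intro w
    have hsub : S.filter (fun t => 2 ≤ G.mult w t.2.2.1)
        ⊆ (univ.filter (fun u => 2 ≤ G.mult w u)).biUnion
            (fun u => S.filter (fun t => t.2.2.1 = u)) := by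
      intro t ht
      simp only [Finset.mem_filter] at ht
      rw [Finset.mem_biUnion]
      exact ⟨t.2.2.1, by simp only [Finset.mem_filter, Finset.mem_univ, true_and]; exact ht.2,
        Finset.mem_filter.2 ⟨ht.1, rfl⟩⟩
    calc (S.filter (fun t => 2 ≤ G.mult w t.2.2.1)).card
        ≤ ((univ.filter (fun u => 2 ≤ G.mult w u)).biUnion
            (fun u => S.filter (fun t => t.2.2.1 = u))).card := Finset.card_le_card hsub
      _ ≤ ∑ u ∈ univ.filter (fun u => 2 ≤ G.mult w u), (S.filter (fun t => t.2.2.1 = u)).card :=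
          Finset.card_biUnion_le
      _ ≤ ∑ _u ∈ univ.filter (fun u => 2 ≤ G.mult w u), B2 :=
          Finset.sum_le_sum (fun u _ => Fbound2 u)
      _ = (univ.filter (fun u => 2 ≤ G.mult w u)).card * B2 := by
          rw [Finset.sum_const, smul_eq_mul]
      _ ≤ (mt + md) * B2 := Nat.mul_le_mul_right _ (hU w)
  have Gbound3 : ∀ w : Fin n,
      (S.filter (fun t => 2 ≤ G.mult w t.2.2.2)).card ≤ (mt + md) * B2 := by
    intro w
    have hsub : S.filter (fun t => 2 ≤ G.mult w t.2.2.2)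
        ⊆ (univ.filter (fun u => 2 ≤ G.mult w u)).biUnion
            (fun u => S.filter (fun t => t.2.2.2 = u)) := by
      intro t ht
      simp only [Finset.mem_filter] at ht
      rw [Finset.mem_biUnion]
      exact ⟨t.2.2.2, by simp only [Finset.mem_filter, Finset.mem_univ, true_and]; exact ht.2,
        Finset.mem_filter.2 ⟨ht.1, rfl⟩⟩
    calc (S.filter (fun t => 2 ≤ G.mult w t.2.2.2)).card
        ≤ ((univ.filter (fun u => 2 ≤ G.mult w u)).biUnion
            (fun u => S.filter (fun t => t.2.2.2 = u))).card := Finset.card_le_card hsub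
      _ ≤ ∑ u ∈ univ.filter (fun u => 2 ≤ G.mult w u), (S.filter (fun t => t.2.2.2 = u)).card :=
          Finset.card_biUnion_le
      _ ≤ ∑ _u ∈ univ.filter (fun u => 2 ≤ G.mult w u), B2 :=
          Finset.sum_le_sum (fun u _ => Fbound3 u)
      _ = (univ.filter (fun u => 2 ≤ G.mult w u)).card * B2 := by
          rw [Finset.sum_const, smul_eq_mul]
      _ ≤ (mt + md) * B2 := Nat.mul_le_mul_right _ (hU w)
  -- bound for stars centered at v1
  have Ecbound : (S.filter (fun t => t.1 = v1)).card ≤ dh ^ 3 := by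
    by_cases hv : h ≤ v1.val
    · have h1 : (S.filter (fun t => t.1 = v1)).card
          ≤ ((Nc v1 ×ˢ Nc v1 ×ˢ Nc v1)).card := by
        apply Finset.card_le_card_of_injOn (fun t => t.2)
        · intro t ht
          simp only [Finset.mem_coe, Finset.mem_filter] at ht
          obtain ⟨htS, htv⟩ := ht
          rw [hS_def] at htS
          simp only [Finset.mem_filter, Finset.mem_univ, true_and] at htS
          simp only [Finset.mem_coe, Finset.mem_product, hNc_def, Finset.mem_filter, Finset.mem_univ, true_and]
          rw [← htv]
          exact ⟨htS.2.1, htS.2.2.1, htS.2.2.2.1⟩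
        · intro t ht s hs hts
          simp only [Finset.coe_filter, Set.mem_setOf_eq, Finset.mem_filter] at ht hs
          have h1 : t.1 = s.1 := by rw [ht.2, hs.2]
          exact Prod.ext h1 hts
      have h2 : ((Nc v1 ×ˢ Nc v1 ×ˢ Nc v1)).card ≤ dh ^ 3 := by
        rw [Finset.card_product, Finset.card_product]
        have hle : (Nc v1).card ≤ dh := le_trans (hNc_le v1) (hlight_dh v1 hv)
        calc (Nc v1).card * ((Nc v1).card * (Nc v1).card) ≤ dh * (dh * dh) := by
              exact Nat.mul_le_mul hle (Nat.mul_le_mul hle hle)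
          _ = dh ^ 3 := by ring
      exact h1.trans h2
    · have : S.filter (fun t => t.1 = v1) = ∅ := by
        rw [Finset.filter_eq_empty_iff]
        intro t ht
        rw [hS_def] at ht
        simp only [Finset.mem_filter, Finset.mem_univ, true_and] at ht
        intro he
        rw [he] at ht
        exact hv ht.1
      rw [this]
      simp
  -- covering the difference S \ T by bad events
  have cover : S \ T ⊆
      S.filter (fun t => G.mult v1 t.1 ≠ 0) ∪
      (S.filter (fun t => t.1 = v1) ∪
      (S.filter (fun t => t.2.1 = v3) ∪
      (S.filter (fun t => t.2.1 = v5) ∪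
      (S.filter (fun t => t.2.1 = v7) ∪
      (S.filter (fun t => t.2.2.1 = v3) ∪
      (S.filter (fun t => t.2.2.1 = v5) ∪
      (S.filter (fun t => t.2.2.1 = v7) ∪
      (S.filter (fun t => t.2.2.2 = v3) ∪
      (S.filter (fun t => t.2.2.2 = v5) ∪
      (S.filter (fun t => t.2.2.2 = v7) ∪
      (S.filter (fun t => 2 ≤ G.mult v3 t.2.1) ∪
      (S.filter (fun t => 2 ≤ G.mult v5 t.2.2.1) ∪
       S.filter (fun t => 2 ≤ G.mult v7 t.2.2.2))))))))))))) := by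
    intro t ht
    rw [Finset.mem_sdiff] at ht
    obtain ⟨htS, htT⟩ := ht
    have hSc := htS
    rw [hS_def] at hSc
    simp only [Finset.mem_filter, Finset.mem_univ, true_and] at hSc
    obtain ⟨hcv, hs1, hs2, hs3, hd1', hd2', hd3'⟩ := hSc
    by_contra hcon
    simp only [Finset.mem_union, not_or] at hcon
    obtain ⟨hE1, hEc, hF13, hF15, hF17, hF23, hF25, hF27, hF33, hF35, hF37, hG1, hG2, hG3⟩ := hcon
    have e1 : G.mult v1 t.1 = 0 := by
      by_contra hx; exact hE1 (Finset.mem_filter.2 ⟨htS, hx⟩)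
    have ec : t.1 ≠ v1 := fun hx => hEc (Finset.mem_filter.2 ⟨htS, hx⟩)
    have f13 : t.2.1 ≠ v3 := fun hx => hF13 (Finset.mem_filter.2 ⟨htS, hx⟩)
    have f15 : t.2.1 ≠ v5 := fun hx => hF15 (Finset.mem_filter.2 ⟨htS, hx⟩)
    have f17 : t.2.1 ≠ v7 := fun hx => hF17 (Finset.mem_filter.2 ⟨htS, hx⟩)
    have f23 : t.2.2.1 ≠ v3 := fun hx => hF23 (Finset.mem_filter.2 ⟨htS, hx⟩)
    have f25 : t.2.2.1 ≠ v5 := fun hx => hF25 (Finset.mem_filter.2 ⟨htS, hx⟩)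
    have f27 : t.2.2.1 ≠ v7 := fun hx => hF27 (Finset.mem_filter.2 ⟨htS, hx⟩)
    have f33 : t.2.2.2 ≠ v3 := fun hx => hF33 (Finset.mem_filter.2 ⟨htS, hx⟩)
    have f35 : t.2.2.2 ≠ v5 := fun hx => hF35 (Finset.mem_filter.2 ⟨htS, hx⟩)
    have f37 : t.2.2.2 ≠ v7 := fun hx => hF37 (Finset.mem_filter.2 ⟨htS, hx⟩)
    have g1 : G.mult v3 t.2.1 ≤ 1 := by
      by_contra hx; exact hG1 (Finset.mem_filter.2 ⟨htS, by omega⟩)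
    have g2 : G.mult v5 t.2.2.1 ≤ 1 := by
      by_contra hx; exact hG2 (Finset.mem_filter.2 ⟨htS, by omega⟩)
    have g3 : G.mult v7 t.2.2.2 ≤ 1 := by
      by_contra hx; exact hG3 (Finset.mem_filter.2 ⟨htS, by omega⟩)
    have t1v3 : t.1 ≠ v3 := by
      intro hx; rw [hx] at e1; rw [hs13.2] at e1; exact one_ne_zero e1
    have t1v5 : t.1 ≠ v5 := by
      intro hx; rw [hx] at e1; rw [hs15.2] at e1; exact one_ne_zero e1
    have t1v7 : t.1 ≠ v7 := by
      intro hx; rw [hx] at e1; rw [hs17.2] at e1; exact one_ne_zero e1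
    have o1v1 : t.2.1 ≠ v1 := by
      intro hx
      have := hs1.2
      rw [hx] at this
      rw [G.symm t.1 v1] at this
      rw [e1] at this
      exact one_ne_zero this.symm
    have o2v1 : t.2.2.1 ≠ v1 := by
      intro hx
      have := hs2.2
      rw [hx] at this
      rw [G.symm t.1 v1] at this
      rw [e1] at this
      exact one_ne_zero this.symm
    have o3v1 : t.2.2.2 ≠ v1 := by
      intro hx
      have := hs3.2
      rw [hx] at this
      rw [G.symm t.1 v1] at this
      rw [e1] at this
      exact one_ne_zero this.symm
    apply htT
    rw [hT_def]
    simp only [Finset.mem_filter, Finset.mem_univ, true_and]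
    exact ⟨hcv, hs1, hs2, hs3, hd1', hd2', hd3', ec, t1v3, t1v5, t1v7,
      o1v1, f13, f15, f17, o2v1, f23, f25, f27, o3v1, f33, f35, f37, e1, g1, g2, g3⟩
  -- Part B : |S| is at most |T| plus the bad-event bounds
  have hcover_card : (S \ T).card ≤
      B3 + (dh ^ 3 + (B2 + (B2 + (B2 + (B2 + (B2 + (B2 + (B2 + (B2 + (B2 +
        ((mt + md) * B2 + ((mt + md) * B2 + (mt + md) * B2)))))))))))) := by
    refine (Finset.card_le_card cover).trans ?_
    refine (Finset.card_union_le _ _).trans (Nat.add_le_add (Ebound v1) ?_)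
    refine (Finset.card_union_le _ _).trans (Nat.add_le_add Ecbound ?_)
    refine (Finset.card_union_le _ _).trans (Nat.add_le_add (Fbound1 v3) ?_)
    refine (Finset.card_union_le _ _).trans (Nat.add_le_add (Fbound1 v5) ?_)
    refine (Finset.card_union_le _ _).trans (Nat.add_le_add (Fbound1 v7) ?_)
    refine (Finset.card_union_le _ _).trans (Nat.add_le_add (Fbound2 v3) ?_)
    refine (Finset.card_union_le _ _).trans (Nat.add_le_add (Fbound2 v5) ?_)
    refine (Finset.card_union_le _ _).trans (Nat.add_le_add (Fbound2 v7) ?_)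
    refine (Finset.card_union_le _ _).trans (Nat.add_le_add (Fbound3 v3) ?_)
    refine (Finset.card_union_le _ _).trans (Nat.add_le_add (Fbound3 v5) ?_)
    refine (Finset.card_union_le _ _).trans (Nat.add_le_add (Fbound3 v7) ?_)
    refine (Finset.card_union_le _ _).trans (Nat.add_le_add (Gbound1 v3) ?_)
    exact (Finset.card_union_le _ _).trans (Nat.add_le_add (Gbound2 v5) (Gbound3 v7))
  have hsplitB : S.card ≤ (S \ T).card + T.card := Finset.card_le_card_sdiff_add_card
  calc L3 ≤ S.card + (18 * mt * dh ^ 2 + 12 * md * dh ^ 2) := partA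
    _ ≤ ((S \ T).card + T.card) + (18 * mt * dh ^ 2 + 12 * md * dh ^ 2) :=
        Nat.add_le_add_right hsplitB _
    _ ≤ ((B3 + (dh ^ 3 + (B2 + (B2 + (B2 + (B2 + (B2 + (B2 + (B2 + (B2 + (B2 +
          ((mt + md) * B2 + ((mt + md) * B2 + (mt + md) * B2))))))))))))) + T.card)
        + (18 * mt * dh ^ 2 + 12 * md * dh ^ 2) :=
        Nat.add_le_add_right (Nat.add_le_add_right hcover_card _) _
    _ = T.card + (18 * mt * dh ^ 2 + 12 * md * dh ^ 2 + B3 + 3 * (mt + md) * B2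
        + dh ^ 3 + 9 * B2) := by ring
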